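/- In a decomposition D of an ℓ-regular graph G (ℓ odd) into trails of length ℓ, no vertex can be the endpoint of two distinct elements of D, and every vertex is an endpoint of at least one element of D. -/

import Mathlib

open SimpleGraph

/-- In a decomposition `D` of an `ℓ`-regular graph `G` (`ℓ` odd) into trails of
length `ℓ`, no vertex can be the endpoint of two distinct elements of `D`, and every vertex is
an endpoint of at least one element of `D`. (A vertex is an endpoint of a trail `T` when it has
odd degree in `T`, i.e. an odd number of edges of `T` are incident to it.) -/
theorem stmt_18 {V : Type*} [Fintype V] [DecidableEq V]
    (G : SimpleGraph V) (ℓ : ℕ) (hodd : Odd ℓ)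
    (hreg : ∀ v : V, (G.neighborSet v).ncard = ℓ)
    (D : Set (Σ u : V, Σ v : V, G.Walk u v))
    (htrails : ∀ T ∈ D, T.2.2.IsTrail ∧ T.2.2.length = ℓ)
    (hcover : ∀ e ∈ G.edgeSet, ∃! T, T ∈ D ∧ e ∈ T.2.2.edges) :
    ∀ v : V,
      (∀ T₁ ∈ D, ∀ T₂ ∈ D,
        Odd (T₁.2.2.edges.countP (fun e => v ∈ e)) →
        Odd (T₂.2.2.edges.countP (fun e => v ∈ e)) → T₁ = T₂) ∧
      (∃ T ∈ D, Odd (T.2.2.edges.countP (fun e => v ∈ e))) := by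
  classical
  set cnt : (Σ u : V, Σ v : V, G.Walk u v) → V → ℕ :=
    fun T v => T.2.2.edges.countP (fun e => v ∈ e) with hcnt
  have hlpos : ℓ ≠ 0 := by rcases hodd with ⟨k, hk⟩; omega
  -- distinct trails have disjoint edges
  have hdisj : ∀ T₁ ∈ D, ∀ T₂ ∈ D, T₁ ≠ T₂ →
      ∀ e, e ∈ T₁.2.2.edges → e ∈ T₂.2.2.edges → False := by
    intro T₁ h1 T₂ h2 hne e he1 he2
    have heG := T₁.2.2.edges_subset_edgeSet he1
    obtain ⟨T, _, hu⟩ := hcover e heG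
    exact hne ((hu T₁ ⟨h1, he1⟩).trans (hu T₂ ⟨h2, he2⟩).symm)
  have hne_nil : ∀ T ∈ D, T.2.2.edges ≠ [] := by
    intro T hT h
    have hlen := (htrails T hT).2
    have h2 := T.2.2.length_edges
    rw [h] at h2
    simp at h2
    omega
  -- D is finite
  have hDfin : D.Finite := by
    apply Set.Finite.of_finite_image (f := fun T => T.2.2.edges.toFinset) (Set.toFinite _)
    intro T₁ h1 T₂ h2 heq
    by_contra hne
    obtain ⟨e, he⟩ := List.exists_mem_of_ne_nil _ (hne_nil T₁ h1)
    have heq' : T₁.2.2.edges.toFinset = T₂.2.2.edges.toFinset := heq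
    have he2 : e ∈ T₂.2.2.edges := by
      have : e ∈ T₂.2.2.edges.toFinset := heq' ▸ List.mem_toFinset.mpr he
      exact List.mem_toFinset.mp this
    exact hdisj T₁ h1 T₂ h2 hne e he he2
  set DF := hDfin.toFinset with hDF
  have hmemDF : ∀ T, T ∈ DF ↔ T ∈ D := fun T => hDfin.mem_toFinset
  -- filtered edge finsets
  set Ft : (Σ u : V, Σ v : V, G.Walk u v) → V → Finset (Sym2 V) :=
    fun T v => T.2.2.edges.toFinset.filter (fun e => v ∈ e) with hFt
  have hFtcard : ∀ T ∈ D, ∀ v, (Ft T v).card = cnt T v := by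
    intro T hT v
    have hnd := (htrails T hT).1.edges_nodup
    rw [hFt, hcnt]
    simp only
    rw [List.countP_eq_length_filter, ← List.toFinset_card_of_nodup (hnd.filter _),
      List.toFinset_filter]
    simp
  have hFtdisj : ∀ v, ∀ T₁ ∈ DF, ∀ T₂ ∈ DF, T₁ ≠ T₂ → Disjoint (Ft T₁ v) (Ft T₂ v) := by
    intro v T₁ h1 T₂ h2 hne
    rw [Finset.disjoint_left]
    intro e he1 he2
    simp only [hFt, Finset.mem_filter, List.mem_toFinset] at he1 he2
    exact hdisj T₁ ((hmemDF T₁).mp h1) T₂ ((hmemDF T₂).mp h2) hne e he1.1 he2.1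
  -- degree
  have hdeg : ∀ v, G.degree v = ℓ := by
    intro v
    rw [← hreg v, SimpleGraph.degree, neighborFinset_def, Set.ncard_eq_toFinset_card']
  -- incidence decomposition
  have hinc : ∀ v, G.incidenceFinset v = DF.biUnion (fun T => Ft T v) := by
    intro v
    ext e
    simp only [mem_incidenceFinset, Finset.mem_biUnion, hFt, Finset.mem_filter,
      List.mem_toFinset, hmemDF]
    constructor
    · rintro ⟨heG, hve⟩
      obtain ⟨T, ⟨hT, heT⟩, _⟩ := hcover e heG
      exact ⟨T, hT, heT, hve⟩
    · rintro ⟨T, hT, heT, hve⟩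
      exact ⟨T.2.2.edges_subset_edgeSet heT, hve⟩
  -- vertex count
  have hvcount : ∀ v, ∑ T ∈ DF, cnt T v = ℓ := by
    intro v
    have h1 : (DF.biUnion (fun T => Ft T v)).card = ∑ T ∈ DF, (Ft T v).card :=
      Finset.card_biUnion (hFtdisj v)
    rw [← hinc v, card_incidenceFinset_eq_degree, hdeg v] at h1
    rw [h1]
    apply Finset.sum_congr rfl
    intro T hT
    exact (hFtcard T ((hmemDF T).mp hT) v).symm
  -- existence part
  have hexists : ∀ v, ∃ T ∈ D, Odd (cnt T v) := by
    intro v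
    by_contra h
    push_neg at h
    have : Even (∑ T ∈ DF, cnt T v) := by
      apply Finset.even_sum
      intro T hT
      exact Nat.not_odd_iff_even.mp (h T ((hmemDF T).mp hT))
    rw [hvcount v] at this
    exact (Nat.not_odd_iff_even.mpr this) hodd
  -- endpoints of a trail
  have hends : ∀ T ∈ D, (Finset.univ.filter (fun x => Odd (cnt T x))).card ≤ 2 := by
    intro T hT
    have hsub : Finset.univ.filter (fun x => Odd (cnt T x)) ⊆ {T.1, T.2.1} := by
      intro x hx
      simp only [Finset.mem_filter] at hx
      have := ((htrails T hT).1.even_countP_edges_iff x)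
      have hodd' : ¬ Even (cnt T x) := Nat.not_even_iff_odd.mpr hx.2
      rw [hcnt] at hodd'
      rw [this] at hodd'
      push_neg at hodd'
      rcases hodd' with ⟨_, h2⟩
      simp only [Finset.mem_insert, Finset.mem_singleton]
      tauto
    calc (Finset.univ.filter (fun x => Odd (cnt T x))).card
        ≤ ({T.1, T.2.1} : Finset V).card := Finset.card_le_card hsub
      _ ≤ 2 := Finset.card_insert_le _ _ |>.trans (by simp)
  -- edge count: |E| = |DF| * ℓ
  have hedges : G.edgeFinset = DF.biUnion (fun T => T.2.2.edges.toFinset) := by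
    ext e
    simp only [mem_edgeFinset, Finset.mem_biUnion, List.mem_toFinset, hmemDF]
    constructor
    · intro heG
      obtain ⟨T, ⟨hT, heT⟩, _⟩ := hcover e heG
      exact ⟨T, hT, heT⟩
    · rintro ⟨T, _, heT⟩
      exact T.2.2.edges_subset_edgeSet heT
  have hecard : G.edgeFinset.card = DF.card * ℓ := by
    rw [hedges, Finset.card_biUnion]
    · rw [Finset.sum_congr rfl (fun T hT => ?_), Finset.sum_const, smul_eq_mul]
      have hnd := (htrails T ((hmemDF T).mp hT)).1.edges_nodup
      rw [List.toFinset_card_of_nodup hnd, T.2.2.length_edges, (htrails T ((hmemDF T).mp hT)).2]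
    · intro T₁ h1 T₂ h2 hne
      rw [Function.onFun, Finset.disjoint_left]
      intro e he1 he2
      simp only [List.mem_toFinset] at he1 he2
      exact hdisj T₁ ((hmemDF T₁).mp h1) T₂ ((hmemDF T₂).mp h2) hne e he1 he2
  have hVcard : Fintype.card V = 2 * DF.card := by
    have h := G.sum_degrees_eq_twice_card_edges
    rw [Finset.sum_congr rfl (fun v _ => hdeg v), Finset.sum_const, smul_eq_mul,
      hecard] at h
    rw [Finset.card_univ] at h
    have : Fintype.card V * ℓ = 2 * DF.card * ℓ := by rw [h]; ring
    exact Nat.eq_of_mul_eq_mul_right (Nat.pos_of_ne_zero hlpos) this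
  -- double counting
  have hdouble : ∑ x : V, (DF.filter (fun T => Odd (cnt T x))).card
      = ∑ T ∈ DF, (Finset.univ.filter (fun x => Odd (cnt T x))).card := by
    simp only [Finset.card_filter]
    rw [Finset.sum_comm]
  -- now prove the uniqueness
  intro v
  refine ⟨?_, hexists v⟩
  intro T₁ h1 T₂ h2 ho1 ho2
  by_contra hne
  have hlt : ∑ x : V, (1 : ℕ) < ∑ x : V, (DF.filter (fun T => Odd (cnt T x))).card := by
    apply Finset.sum_lt_sum
    · intro x _
      obtain ⟨T, hT, hoT⟩ := hexists x
      have : T ∈ DF.filter (fun T => Odd (cnt T x)) :=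
        Finset.mem_filter.mpr ⟨(hmemDF T).mpr hT, hoT⟩
      exact Finset.card_pos.mpr ⟨T, this⟩
    · refine ⟨v, Finset.mem_univ v, ?_⟩
      apply Finset.one_lt_card.mpr
      exact ⟨T₁, Finset.mem_filter.mpr ⟨(hmemDF T₁).mpr h1, ho1⟩,
        T₂, Finset.mem_filter.mpr ⟨(hmemDF T₂).mpr h2, ho2⟩, hne⟩
  have hub : ∑ x : V, (DF.filter (fun T => Odd (cnt T x))).card ≤ 2 * DF.card := by
    rw [hdouble]
    calc ∑ T ∈ DF, (Finset.univ.filter (fun x => Odd (cnt T x))).card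
        ≤ ∑ T ∈ DF, 2 := Finset.sum_le_sum (fun T hT => hends T ((hmemDF T).mp hT))
      _ = 2 * DF.card := by rw [Finset.sum_const, smul_eq_mul, Nat.mul_comm]
  rw [Finset.sum_const, smul_eq_mul, Nat.mul_one, Finset.card_univ, hVcard] at hlt
  omega
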